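/- Fredholm index of the projection restricted to a finite-codimensional closed subspace: Let E be a Fréchet space, n ∈ ℕ, and let S be a closed linear subspace of E × ℝⁿ of finite codimension m (i.e., dim((E × ℝⁿ)/S) = m). Let π : S → E be the restriction to S of the projection E × ℝⁿ → E onto the first factor. Then the kernel of π equals S ∩ ({0} × ℝⁿ) and is finite-dimensional (of dimension at most n), the image π(S) is a closed subspace of finite codimension in E, and dim ker π − dim(E/π(S)) = n − m. -/

import Mathlib

/-- **Fredholm index of the projection restricted to a finite-codimensional
closed subspace.** `S ⊆ E × ℝⁿ` closed of codimension `m`; the restriction `π`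
of the first projection has kernel `S ∩ ({0} × ℝⁿ)` of dimension at most `n`,
closed image of finite codimension, and index `dim ker π - codim im π = n - m`. -/
theorem projection_restricted_fredholm_index
    (E : Type)
    [AddCommGroup E] [Module ℝ E] [MetricSpace E] [IsTopologicalAddGroup E]
    [ContinuousSMul ℝ E] [CompleteSpace E] [LocallyConvexSpace ℝ E]
    (hE : ∀ x y z : E, dist (x + z) (y + z) = dist x y)
    (n m : ℕ)
    (S : Submodule ℝ (E × (Fin n → ℝ)))
    (hSclosed : IsClosed (S : Set (E × (Fin n → ℝ))))
    (hSfin : FiniteDimensional ℝ ((E × (Fin n → ℝ)) ⧸ S))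
    (hm : Module.finrank ℝ ((E × (Fin n → ℝ)) ⧸ S) = m) :
    ∀ π : ↥S →ₗ[ℝ] E, (∀ v : ↥S, π v = (v : E × (Fin n → ℝ)).1) →
      -- the kernel of π equals S ∩ ({0} × ℝⁿ)
      ((LinearMap.ker π : Set ↥S) = {v : ↥S | (v : E × (Fin n → ℝ)).1 = 0}) ∧
      FiniteDimensional ℝ ↥(LinearMap.ker π) ∧
      Module.finrank ℝ ↥(LinearMap.ker π) ≤ n ∧
      -- the image is closed and has finite codimension
      IsClosed ((LinearMap.range π : Submodule ℝ E) : Set E) ∧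
      FiniteDimensional ℝ (E ⧸ LinearMap.range π) ∧
      -- the index is n - m
      (Module.finrank ℝ ↥(LinearMap.ker π) : ℤ) -
        (Module.finrank ℝ (E ⧸ LinearMap.range π) : ℤ) = (n : ℤ) - (m : ℤ) := by
  intro π hπ
  haveI : IsClosed (S : Set (E × (Fin n → ℝ))) := hSclosed
  -- kernel description
  have hker : (LinearMap.ker π : Set ↥S) = {v : ↥S | (v : E × (Fin n → ℝ)).1 = 0} := by
    ext v
    simp [LinearMap.mem_ker, hπ]
  -- auxiliary maps
  set q := S.mkQ with hq
  set g : (Fin n → ℝ) →ₗ[ℝ] _ := q.comp (LinearMap.inr ℝ E (Fin n → ℝ)) with hg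
  set h : E →ₗ[ℝ] _ := q.comp (LinearMap.inl ℝ E (Fin n → ℝ)) with hh
  have hgmem : ∀ y : Fin n → ℝ, g y = 0 ↔ ((0, y) : E × (Fin n → ℝ)) ∈ S := by
    intro y
    simp [hg, hq, Submodule.Quotient.mk_eq_zero]
  -- equiv between ker π and ker g
  have e : ↥(LinearMap.ker π) ≃ₗ[ℝ] ↥(LinearMap.ker g) := by
    refine
      { toFun := fun v => ⟨(v.1 : E × (Fin n → ℝ)).2, ?_⟩
        map_add' := fun a b => rfl
        map_smul' := fun c a => rfl
        invFun := fun y => ⟨⟨((0 : E), y.1), ?_⟩, ?_⟩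
        left_inv := ?_
        right_inv := ?_ }
    · have hv1 : (v.1 : E × (Fin n → ℝ)).1 = 0 := by
        have := v.2
        rw [LinearMap.mem_ker, hπ] at this
        exact this
      rw [LinearMap.mem_ker, hgmem]
      have : ((0 : E), (v.1 : E × (Fin n → ℝ)).2) = (v.1 : E × (Fin n → ℝ)) := by
        rw [← hv1]
      rw [this]
      exact v.1.2
    · have := y.2
      rw [LinearMap.mem_ker, hgmem] at this
      exact this
    · rw [LinearMap.mem_ker, hπ]
    · intro v
      ext
      · have hv1 : (v.1 : E × (Fin n → ℝ)).1 = 0 := by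
          have := v.2
          rw [LinearMap.mem_ker, hπ] at this
          exact this
        exact hv1.symm
      · rfl
    · intro y
      rfl
  -- range description
  have hrange : LinearMap.range π = Submodule.comap h (LinearMap.range g) := by
    ext x
    constructor
    · rintro ⟨v, rfl⟩
      rw [hπ]
      refine ⟨-(v : E × (Fin n → ℝ)).2, ?_⟩
      simp only [hg, hh, hq, LinearMap.comp_apply, LinearMap.inr_apply, LinearMap.inl_apply,
        Submodule.mkQ_apply]
      rw [Submodule.Quotient.eq]
      have : ((0 : E), -(v : E × (Fin n → ℝ)).2) - ((v : E × (Fin n → ℝ)).1, (0 : Fin n → ℝ))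
          = -(v : E × (Fin n → ℝ)) := by
        ext <;> simp
      rw [this]
      exact S.neg_mem v.2
    · rintro ⟨y, hy⟩
      simp only [hg, hh, hq, LinearMap.comp_apply, LinearMap.inr_apply, LinearMap.inl_apply,
        Submodule.mkQ_apply] at hy
      rw [Submodule.Quotient.eq] at hy
      have hmem : ((x, -y) : E × (Fin n → ℝ)) ∈ S := by
        have : ((x, -y) : E × (Fin n → ℝ)) = -(((0 : E), y) - (x, (0 : Fin n → ℝ))) := by
          ext <;> simp
        rw [this]
        exact S.neg_mem hy
      exact ⟨⟨(x, -y), hmem⟩, by rw [hπ]⟩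
  -- closedness of range
  have hcont_h : Continuous h := by
    simp only [hh, hq]
    exact continuous_quot_mk.comp (continuous_id.prodMk continuous_const)
  have hclosedA : IsClosed ((LinearMap.range g : Submodule ℝ _) : Set ((E × (Fin n → ℝ)) ⧸ S)) :=
    Submodule.closed_of_finiteDimensional _
  have hclosed : IsClosed ((LinearMap.range π : Submodule ℝ E) : Set E) := by
    rw [hrange]
    exact hclosedA.preimage hcont_h
  -- cokernel equivalence
  set φ : E →ₗ[ℝ] _ := (LinearMap.range g).mkQ.comp h with hφ
  have hkerφ : LinearMap.ker φ = LinearMap.range π := by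
    rw [hrange]
    ext x
    simp [hφ, Submodule.Quotient.mk_eq_zero]
  have hsurj : Function.Surjective φ := by
    intro z
    obtain ⟨w, rfl⟩ := (LinearMap.range g).mkQ_surjective z
    obtain ⟨p, rfl⟩ := S.mkQ_surjective w
    refine ⟨p.1, ?_⟩
    simp only [hφ, hh, hq, LinearMap.comp_apply, LinearMap.inl_apply]
    rw [← sub_eq_zero, ← map_sub, ← map_sub, Submodule.mkQ_apply, Submodule.Quotient.mk_eq_zero]
    have hdiff : ((p.1, 0) : E × (Fin n → ℝ)) - p = ((0 : E), -p.2) := by ext <;> simp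
    exact ⟨-p.2, by
      simp only [hg, hq, LinearMap.comp_apply, LinearMap.inr_apply]
      rw [hdiff]⟩
  have ecoker : (E ⧸ LinearMap.range π) ≃ₗ[ℝ]
      (((E × (Fin n → ℝ)) ⧸ S) ⧸ LinearMap.range g) := by
    rw [← hkerφ]
    exact φ.quotKerEquivOfSurjective hsurj
  -- dimension counts
  haveI hfinker : FiniteDimensional ℝ ↥(LinearMap.ker g) := inferInstance
  haveI : FiniteDimensional ℝ ↥(LinearMap.ker π) := LinearEquiv.finiteDimensional e.symm
  haveI : FiniteDimensional ℝ (((E × (Fin n → ℝ)) ⧸ S) ⧸ LinearMap.range g) := inferInstance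
  haveI hfincoker : FiniteDimensional ℝ (E ⧸ LinearMap.range π) :=
    LinearEquiv.finiteDimensional ecoker.symm
  have hrk1 : Module.finrank ℝ ↥(LinearMap.ker π) = Module.finrank ℝ ↥(LinearMap.ker g) :=
    e.finrank_eq
  have hrn : Module.finrank ℝ ↥(LinearMap.range g) + Module.finrank ℝ ↥(LinearMap.ker g) = n := by
    have := LinearMap.finrank_range_add_finrank_ker g
    simpa using this
  have hrk2 : Module.finrank ℝ (E ⧸ LinearMap.range π)
      = Module.finrank ℝ (((E × (Fin n → ℝ)) ⧸ S) ⧸ LinearMap.range g) :=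
    ecoker.finrank_eq
  have hrq : Module.finrank ℝ (((E × (Fin n → ℝ)) ⧸ S) ⧸ LinearMap.range g)
      + Module.finrank ℝ ↥(LinearMap.range g) = m := by
    rw [← hm]
    exact Submodule.finrank_quotient_add_finrank _
  have hle : Module.finrank ℝ ↥(LinearMap.ker π) ≤ n := by
    rw [hrk1]; omega
  refine ⟨hker, inferInstance, hle, hclosed, hfincoker, ?_⟩
  rw [hrk1, hrk2]
  omega
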